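/- Offset Tree induction step: let T be a binary tree whose leaves are actions with expected rewards μ_a ∈ [0,1] (for a fixed x). Each internal node v, with input actions a (from left subtree output) and a' (from right), has importance-weighted regret wreg_v = (μ_{winner'} − μ_{winner})_+ where winner is the action chosen at v and winner' the other input; formally wreg_v = max(μ_a, μ_{a'}) − μ_{chosen}. Then the regret of the root's output action, max_{leaf y} μ_y − μ_{output}, is at most the sum over internal nodes v of wreg_v. -/
import Mathlib


/-- A finite full binary tree whose leaves are labeled by actions (naturals) and each
of whose internal nodes deterministically selects one of its two children's output
actions (`true` = left child). -/
inductive ChoiceTree where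
  | leaf : ℕ → ChoiceTree
  | node : ChoiceTree → ChoiceTree → Bool → ChoiceTree

namespace ChoiceTree

/-- The output action of the tree. -/
def output : ChoiceTree → ℕ
  | leaf a => a
  | node l r b => if b then l.output else r.output

/-- The list of actions at the leaves. -/
def leaves : ChoiceTree → List ℕ
  | leaf a => [a]
  | node l r _ => l.leaves ++ r.leaves

/-- The sum over internal nodes `v` of the importance-weighted regret
`wreg_v = max(μ a, μ a') − μ (chosen)`, where `a, a'` are the outputs of the two
subtrees of `v` and `chosen` is the one selected at `v`. -/
def wregSum (μ : ℕ → ℝ) : ChoiceTree → ℝ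
  | leaf _ => 0
  | node l r b =>
      wregSum μ l + wregSum μ r +
        (max (μ l.output) (μ r.output) - μ (if b then l.output else r.output))

end ChoiceTree

lemma wregSum_nonneg (μ : ℕ → ℝ) : ∀ T : ChoiceTree, 0 ≤ T.wregSum μ := by
  intro T
  induction T with
  | leaf a => simp [ChoiceTree.wregSum]
  | node l r b ihl ihr =>
      simp only [ChoiceTree.wregSum]
      have : μ (if b then l.output else r.output) ≤ max (μ l.output) (μ r.output) := by
        cases b <;> simp [le_max_left, le_max_right]
      linarith

/-- Offset Tree induction step: for any binary tree `T` over actions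
with distinct leaf labels and expected rewards `μ_a ∈ [0,1]`, the regret of the root's
output action, `max_{leaf y} μ_y − μ_{output}`, is at most the sum over internal nodes
of their importance-weighted regrets. -/
theorem offset_tree_induction (T : ChoiceTree) (μ : ℕ → ℝ)
    (hdistinct : T.leaves.Nodup) (hμ : ∀ a, μ a ∈ Set.Icc (0:ℝ) 1) :
    ∀ y ∈ T.leaves, μ y - μ T.output ≤ T.wregSum μ := by
  clear hdistinct hμ
  induction T with
  | leaf a =>
      intro y hy
      simp only [ChoiceTree.leaves, List.mem_singleton] at hy
      simp [hy, ChoiceTree.output, ChoiceTree.wregSum]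
  | node l r b ihl ihr =>
      intro y hy
      have hl := wregSum_nonneg μ l
      have hr := wregSum_nonneg μ r
      simp only [ChoiceTree.leaves, List.mem_append] at hy
      simp only [ChoiceTree.output, ChoiceTree.wregSum]
      rcases hy with hy | hy
      · have := ihl y hy
        have h1 : μ l.output ≤ max (μ l.output) (μ r.output) := le_max_left _ _
        linarith
      · have := ihr y hy
        have h1 : μ r.output ≤ max (μ l.output) (μ r.output) := le_max_right _ _
        linarith
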